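/- Fix T_q > 0 and let g(T) := T − T_q · log T. If 0 < T⁻ < T_q < T⁺ and g(T⁺) = g(T⁻) (thermodynamic equidistance), then T⁺ − T_q > T_q − T⁻ (the hotter state is strictly farther from T_q in temperature) and T⁺ · T⁻ < T_q². -/

import Mathlib

open Real Set

lemma aux_one_sub_inv_lt_log {x : ℝ} (hx : 1 < x) : 1 - x⁻¹ < Real.log x := by
  have h0 : (0:ℝ) < x⁻¹ := inv_pos.mpr (by linarith)
  have h1 : x⁻¹ ≠ 1 := by
    intro h; have : x = 1 := by field_simp at h; linarith
    linarith
  have := Real.log_lt_sub_one_of_pos h0 h1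
  rw [Real.log_inv] at this
  linarith

/-- AM > LM : for r > 1, 2(r−1) < (r+1) log r. -/
lemma aux_am_lm {r : ℝ} (hr : 1 < r) : 2 * (r - 1) < (r + 1) * Real.log r := by
  set f : ℝ → ℝ := fun x => (x + 1) * Real.log x - 2 * (x - 1) with hf
  have hmono : StrictMonoOn f (Ici 1) := by
    apply strictMonoOn_of_deriv_pos (convex_Ici 1)
    · apply ContinuousOn.sub
      · exact ContinuousOn.mul (by fun_prop)
          (Real.continuousOn_log.mono (by intro x hx; simp at hx ⊢; linarith))
      · fun_prop
    · intro x hx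
      rw [interior_Ici] at hx
      have hx1 : (1:ℝ) < x := hx
      have hx0 : (0:ℝ) < x := by linarith
      have hd : HasDerivAt f (1 * Real.log x + (x + 1) * x⁻¹ - 2) x := by
        have h1 : HasDerivAt (fun x : ℝ => (x + 1) * Real.log x)
            (1 * Real.log x + (x + 1) * x⁻¹) x :=
          ((hasDerivAt_id x).add_const 1).mul (Real.hasDerivAt_log hx0.ne')
        have h2 : HasDerivAt (fun x : ℝ => 2 * (x - 1)) 2 x := by
          simpa using ((hasDerivAt_id x).sub_const 1).const_mul 2
        exact h1.sub h2
      rw [hd.deriv]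
      have hlog := aux_one_sub_inv_lt_log hx1
      have hxinv : (x + 1) * x⁻¹ = 1 + x⁻¹ := by field_simp
      rw [hxinv]
      nlinarith
  have h := hmono (self_mem_Ici) (le_of_lt hr : (1:ℝ) ≤ r) hr
  simp [hf] at h
  linarith
/-- GM < LM : for u > 1, 2 log u < u − 1/u. -/
lemma aux_gm_lm {u : ℝ} (hu : 1 < u) : 2 * Real.log u < u - u⁻¹ := by
  set f : ℝ → ℝ := fun x => x - x⁻¹ - 2 * Real.log x with hf
  have hmono : StrictMonoOn f (Ici 1) := by
    apply strictMonoOn_of_deriv_pos (convex_Ici 1)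
    · apply ContinuousOn.sub
      · apply ContinuousOn.sub continuousOn_id
        exact continuousOn_inv₀.mono (fun x hx => by
          have h1 : (1:ℝ) ≤ x := hx
          simp only [Set.mem_compl_iff, Set.mem_singleton_iff]
          exact ne_of_gt (by linarith))
      · refine continuousOn_const.mul (Real.continuousOn_log.mono ?_)
        intro x hx
        have h1 : (1:ℝ) ≤ x := hx
        simp only [Set.mem_compl_iff, Set.mem_singleton_iff]
        exact ne_of_gt (by linarith)
    · intro x hx
      rw [interior_Ici] at hx
      have hx1 : (1:ℝ) < x := hx
      have hx0 : (0:ℝ) < x := by linarith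
      have hd : HasDerivAt f (1 - (-(x^2)⁻¹) - 2 * x⁻¹) x := by
        have h1 : HasDerivAt (fun x : ℝ => x⁻¹) (-(x^2)⁻¹) x := by
          simpa using (hasDerivAt_inv hx0.ne')
        have h2 : HasDerivAt (fun x : ℝ => 2 * Real.log x) (2 * x⁻¹) x :=
          (Real.hasDerivAt_log hx0.ne').const_mul 2
        exact ((hasDerivAt_id x).sub h1).sub h2
      rw [hd.deriv]
      have hxi : x⁻¹ < 1 := by rw [inv_lt_one_iff₀]; right; exact hx1
      have hinv : ((x:ℝ)^2)⁻¹ = x⁻¹ * x⁻¹ := by rw [sq, mul_inv]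
      nlinarith [mul_pos (sub_pos.mpr hxi) (sub_pos.mpr hxi)]
  have h := hmono (self_mem_Ici) (le_of_lt hu : (1:ℝ) ≤ u) hu
  simp [hf] at h
  linarith

/-- For thermodynamically equidistant temperatures `T⁻ < T_q < T⁺` (i.e. with equal
availability `g(T) = T − T_q log T`), the hotter state is strictly farther from `T_q`
in temperature, and `T⁺ T⁻ < T_q²`. -/
theorem equidistant_hotter_is_farther
    (Tq : ℝ) (hTq : 0 < Tq) (g : ℝ → ℝ)
    (hg : ∀ T, g T = T - Tq * Real.log T)
    (Tm Tp : ℝ) (hTm0 : 0 < Tm) (hTm : Tm < Tq) (hTp : Tq < Tp)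
    (heq : g Tp = g Tm) :
    Tq - Tm < Tp - Tq ∧ Tp * Tm < Tq ^ 2 := by
  have hTp0 : 0 < Tp := lt_trans hTq hTp
  set r : ℝ := Tp / Tm with hr
  have hr1 : 1 < r := (one_lt_div hTm0).mpr (by linarith)
  have hlogr : Real.log r = Real.log Tp - Real.log Tm :=
    Real.log_div hTp0.ne' hTm0.ne'
  have hkey : Tq * Real.log r = Tp - Tm := by
    have h1 := hg Tp; have h2 := hg Tm
    rw [h1, h2] at heq
    rw [hlogr]; linarith
  have hlogpos : 0 < Real.log r := Real.log_pos hr1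
  -- Claim 1
  have hA := aux_am_lm hr1
  have hTpval : r * Tm = Tp := div_mul_cancel₀ Tp hTm0.ne'
  have hclaim1 : Tq - Tm < Tp - Tq := by
    have : 2 * (Tp - Tm) < (Tp + Tm) * Real.log r := by
      have := mul_lt_mul_of_pos_right hA hTm0
      calc 2 * (Tp - Tm) = 2 * (r - 1) * Tm := by rw [← hTpval]; ring
        _ < (r + 1) * Real.log r * Tm := this
        _ = (Tp + Tm) * Real.log r := by rw [mul_right_comm, add_mul, hTpval, one_mul]
    nlinarith [hkey, hlogpos]
  refine ⟨hclaim1, ?_⟩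
  -- Claim 2
  have hu1 : 1 < Real.sqrt r := by
    rw [show (1:ℝ) = Real.sqrt 1 by simp]
    exact Real.sqrt_lt_sqrt (by norm_num) hr1
  have hB := aux_gm_lm hu1
  have hu0 : 0 < Real.sqrt r := by linarith
  have hsq : Real.sqrt r * Real.sqrt r = r :=
    Real.mul_self_sqrt (by positivity)
  have hlogsqrt : 2 * Real.log (Real.sqrt r) = Real.log r := by
    rw [Real.log_sqrt (by positivity)]; ring
  -- log r < (r - 1)/√r, so √(Tp Tm) log r < Tp − Tm
  have hB' : Real.sqrt r * Real.log r < r - 1 := by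
    have := mul_lt_mul_of_pos_left hB hu0
    rw [mul_sub, hsq] at this
    rw [← hlogsqrt]
    calc Real.sqrt r * (2 * Real.log (Real.sqrt r))
        = Real.sqrt r * (2 * Real.log (Real.sqrt r)) := rfl
      _ < r - Real.sqrt r * (Real.sqrt r)⁻¹ := by linarith [this]
      _ = r - 1 := by rw [mul_inv_cancel₀ hu0.ne']
  -- √(Tp Tm) = Tm √r
  have hgm : Real.sqrt (Tp * Tm) = Tm * Real.sqrt r := by
    rw [hr, show Tp * Tm = Tm^2 * (Tp/Tm) by field_simp,
      Real.sqrt_mul (by positivity), Real.sqrt_sq hTm0.le]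
  have hlt : Real.sqrt (Tp * Tm) * Real.log r < Tp - Tm := by
    rw [hgm]
    calc Tm * Real.sqrt r * Real.log r = Tm * (Real.sqrt r * Real.log r) := by ring
      _ < Tm * (r - 1) := by exact mul_lt_mul_of_pos_left hB' hTm0
      _ = Tp - Tm := by rw [mul_sub, mul_comm Tm r, hTpval]; ring
  have hTqgt : Real.sqrt (Tp * Tm) < Tq := by
    rw [← hkey] at hlt
    exact lt_of_mul_lt_mul_right (by linarith [hlt]) hlogpos.le
  have := Real.sq_sqrt (by positivity : (0:ℝ) ≤ Tp * Tm)
  nlinarith [Real.sqrt_nonneg (Tp * Tm)]
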